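/- Let C ⊆ ℝⁿ be closed and let I ⊆ {1,…,n} be nonempty with π(C) unbounded. If the interior of the Clarke tangent cone at infinity T_C(∞_I) is nonempty, then the normal cone multifunction is closed at infinity: whenever x_k ∈ C with ‖π(x_k)‖ → ∞, z_k ∈ N_C(x_k), and z_k → z, one has z ∈ N_C(∞_I). -/

import Mathlib

open Filter Topology Metric Set Bornology
open scoped InnerProductSpace Pointwise

noncomputable section

/-- Euclidean `n`-space. -/
abbrev En (n : ℕ) : Type := EuclideanSpace ℝ (Fin n)

/-- The Clarke tangent cone at infinity of `C ⊆ E`, where "going to infinity" is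
measured by `‖p x‖ → ∞` for a projection map `p`:  `v` belongs to the cone iff for all
sequences `x k ∈ C` with `‖p (x k)‖ → ∞` and all positive sequences `t k → 0` there is a
sequence `w k → v` with `x k + t k • w k ∈ C` for all `k`. -/
def tangentConeAtInfty {E F : Type*} [NormedAddCommGroup E] [NormedSpace ℝ E] [Norm F]
    (p : E → F) (C : Set E) : Set E :=
  {v | ∀ (x : ℕ → E) (t : ℕ → ℝ), (∀ k, x k ∈ C) →
      Tendsto (fun k => ‖p (x k)‖) atTop atTop →
      (∀ k, 0 < t k) → Tendsto t atTop (𝓝 0) →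
      ∃ w : ℕ → E, Tendsto w atTop (𝓝 v) ∧ ∀ k, x k + t k • w k ∈ C}

/-- Projection of `ℝⁿ` onto the coordinates indexed by `I`. -/
def proj {n : ℕ} (I : Finset (Fin n)) (x : En n) : EuclideanSpace ℝ ↥I := WithLp.toLp 2 (fun i => x i)

/-- The normal cone at infinity: the polar of the Clarke tangent cone at infinity. -/
def normalConeAtInfty {n : ℕ} {F : Type*} [Norm F] (p : En n → F) (C : Set (En n)) :
    Set (En n) :=
  {w | ∀ v ∈ tangentConeAtInfty p C, ⟪v, w⟫_ℝ ≤ 0}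

/-- The Clarke tangent cone to `C` at a point `x`. -/
def clarkeTangentCone {E : Type*} [NormedAddCommGroup E] [NormedSpace ℝ E]
    (C : Set E) (x : E) : Set E :=
  {v | ∀ (xk : ℕ → E) (t : ℕ → ℝ), (∀ k, xk k ∈ C) →
      Tendsto xk atTop (𝓝 x) →
      (∀ k, 0 < t k) → Tendsto t atTop (𝓝 0) →
      ∃ w : ℕ → E, Tendsto w atTop (𝓝 v) ∧ ∀ k, xk k + t k • w k ∈ C}

/-- The Clarke normal cone to `C` at a point `x`. -/
def clarkeNormalCone {n : ℕ} (C : Set (En n)) (x : En n) : Set (En n) :=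
  {w | ∀ v ∈ clarkeTangentCone C x, ⟪v, w⟫_ℝ ≤ 0}

lemma proj_sub {n : ℕ} (I : Finset (Fin n)) (a b : En n) :
    proj I (a - b) = proj I a - proj I b := by ext i; simp [proj]

lemma norm_proj_le {n : ℕ} (I : Finset (Fin n)) (a : En n) : ‖proj I a‖ ≤ ‖a‖ := by
  rw [EuclideanSpace.norm_eq, EuclideanSpace.norm_eq]
  refine Real.sqrt_le_sqrt ?_
  have h : ∑ i : ↥I, ‖proj I a i‖ ^ 2 = ∑ i ∈ I, ‖a i‖ ^ 2 := by
    rw [← Finset.sum_coe_sort I (fun i => ‖a i‖ ^ 2)]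
    rfl
  rw [h]
  exact Finset.sum_le_sum_of_subset_of_nonneg (Finset.subset_univ I)
    (fun i _ _ => by positivity)

lemma proj_norm_lower {n : ℕ} (I : Finset (Fin n)) (a b : En n) :
    ‖proj I a‖ - ‖a - b‖ ≤ ‖proj I b‖ := by
  have h1 : ‖proj I a‖ - ‖proj I b‖ ≤ ‖proj I a - proj I b‖ := norm_sub_norm_le _ _
  rw [← proj_sub] at h1
  have h2 := norm_proj_le I (a - b)
  linarith

variable {n : ℕ} {I : Finset (Fin n)} {C : Set (En n)}

lemma tangent_smul {v : En n} (hv : v ∈ tangentConeAtInfty (proj I) C) {c : ℝ} (hc : 0 < c) :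
    c • v ∈ tangentConeAtInfty (proj I) C := by
  intro x t hxC hx ht ht0
  obtain ⟨w, hwlim, hwC⟩ := hv x (fun k => c * t k) hxC hx (fun k => mul_pos hc (ht k))
    (by simpa using ht0.const_mul c)
  refine ⟨fun k => c • w k, hwlim.const_smul c, fun k => ?_⟩
  have : t k • (c • w k) = (c * t k) • w k := by rw [smul_smul, mul_comm]
  rw [this]; exact hwC k

lemma tangent_add {v v' : En n} (hv : v ∈ tangentConeAtInfty (proj I) C)
    (hv' : v' ∈ tangentConeAtInfty (proj I) C) :
    v + v' ∈ tangentConeAtInfty (proj I) C := by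
  intro x t hxC hx ht ht0
  obtain ⟨w, hw, hwC⟩ := hv x t hxC hx ht ht0
  have hsm : Tendsto (fun k => ‖t k • w k‖) atTop (𝓝 0) := by
    have := (ht0.smul hw).norm
    simpa using this
  have hx' : Tendsto (fun k => ‖proj I (x k + t k • w k)‖) atTop atTop := by
    have hev : ∀ᶠ k in atTop, ‖x k + t k • w k - x k‖ ≤ 1 := by
      filter_upwards [hsm.eventually_le_const one_pos] with k hk
      simpa using hk
    refine tendsto_atTop_mono' atTop ?_ (tendsto_atTop_add_const_right atTop (-1) hx)
    filter_upwards [hev] with k hk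
    have := proj_norm_lower I (x k + t k • w k) (x k)
    have h2 := proj_norm_lower I (x k) (x k + t k • w k)
    have h3 : ‖x k - (x k + t k • w k)‖ = ‖x k + t k • w k - x k‖ := norm_sub_rev _ _
    linarith
  obtain ⟨w', hw', hw'C⟩ := hv' (fun k => x k + t k • w k) t hwC hx' ht ht0
  refine ⟨fun k => w k + w' k, hw.add hw', fun k => ?_⟩
  have : x k + t k • (w k + w' k) = (x k + t k • w k) + t k • w' k := by
    rw [smul_add]; abel
  rw [this]; exact hw'C k

lemma unif {u : En n} {σ : ℝ}
    (hball : Metric.closedBall u σ ⊆ tangentConeAtInfty (proj I) C)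
    {ε : ℝ} (hε : 0 < ε) :
    ∃ R δ : ℝ, 0 < δ ∧ ∀ y ∈ C, R ≤ ‖proj I y‖ → ∀ t : ℝ, 0 < t → t < δ →
      ∀ w ∈ Metric.closedBall u σ, Metric.infDist (y + t • w) C ≤ ε * t := by
  by_contra h
  push_neg at h
  have H : ∀ j : ℕ, ∃ y, y ∈ C ∧ ((j : ℝ) ≤ ‖proj I y‖ ∧ ∃ t : ℝ, (0 < t ∧ t < 1 / ((j:ℝ) + 1)) ∧
      ∃ w, w ∈ Metric.closedBall u σ ∧ ε * t < Metric.infDist (y + t • w) C) := by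
    intro j
    obtain ⟨y, hyC, hyR, t, ht0, htlt, w, hw, hbad⟩ := h (j : ℝ) (1 / (j + 1)) (by positivity)
    exact ⟨y, hyC, hyR, t, ⟨ht0, htlt⟩, w, hw, hbad⟩
  choose y hyC hyR t ht w hw hbad using H
  obtain ⟨wl, hwl, φ, hφ, hwconv⟩ := (isCompact_closedBall u σ).tendsto_subseq hw
  have hT := hball hwl
  have hyinf : Tendsto (fun k => ‖proj I (y (φ k))‖) atTop atTop := by
    refine tendsto_atTop_mono (fun k => ?_) tendsto_natCast_atTop_atTop
    exact le_trans (by exact_mod_cast hφ.le_apply) (hyR (φ k))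
  have htconv : Tendsto (fun k => t (φ k)) atTop (𝓝 0) := by
    refine squeeze_zero (fun k => (ht (φ k)).1.le) (fun k => ?_)
      tendsto_one_div_add_atTop_nhds_zero_nat
    refine le_trans (ht (φ k)).2.le ?_
    have h1 : ((k:ℝ) + 1) ≤ ((φ k : ℝ) + 1) := by
      have : k ≤ φ k := hφ.le_apply
      exact by exact_mod_cast Nat.add_le_add_right this 1
    exact one_div_le_one_div_of_le (by positivity) h1
  obtain ⟨w', hw'conv, hw'C⟩ := hT (fun k => y (φ k)) (fun k => t (φ k))
    (fun k => hyC _) hyinf (fun k => (ht _).1) htconv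
  have hdiff : Tendsto (fun k => ‖w (φ k) - w' k‖) atTop (𝓝 0) := by
    have := (hwconv.sub hw'conv).norm
    simpa using this
  obtain ⟨k, hk⟩ := (hdiff.eventually_lt_const hε).exists
  have h1 : Metric.infDist (y (φ k) + t (φ k) • w (φ k)) C ≤
      dist (y (φ k) + t (φ k) • w (φ k)) (y (φ k) + t (φ k) • w' k) :=
    Metric.infDist_le_dist_of_mem (hw'C k)
  have h2 : dist (y (φ k) + t (φ k) • w (φ k)) (y (φ k) + t (φ k) • w' k)
      = t (φ k) * ‖w (φ k) - w' k‖ := by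
    rw [dist_eq_norm]
    have : y (φ k) + t (φ k) • w (φ k) - (y (φ k) + t (φ k) • w' k)
        = t (φ k) • (w (φ k) - w' k) := by rw [smul_sub]; abel
    rw [this, norm_smul, Real.norm_of_nonneg (ht (φ k)).1.le]
  have h3 := hbad (φ k)
  have htp := (ht (φ k)).1
  nlinarith [h3, h1, h2, hk, htp]

set_option maxHeartbeats 1000000 in
lemma hyper (hC : IsClosed C) {u : En n} {σ : ℝ} (hσ : 0 < σ)
    (hball : Metric.closedBall u σ ⊆ tangentConeAtInfty (proj I) C) :
    ∃ R δ : ℝ, 0 < δ ∧ ∀ y ∈ C, R ≤ ‖proj I y‖ → ∀ t : ℝ, 0 < t → t < δ →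
      ∀ w ∈ Metric.closedBall u (σ / 2), y + t • w ∈ C := by
  obtain ⟨R, δ, hδ, hU⟩ := unif hball (ε := σ / 8) (by positivity)
  obtain ⟨K, hK⟩ : ∃ K : ℝ, K = σ + ‖u‖ + 1 := ⟨_, rfl⟩
  have hKpos : 0 < K := by rw [hK]; positivity
  refine ⟨R + 1, min δ K⁻¹, lt_min hδ (by positivity), ?_⟩
  intro y hyC hyR t ht htδ w hw
  have htδ1 : t < δ := lt_of_lt_of_le htδ (min_le_left _ _)
  have htK : t * K ≤ 1 := by
    have h1 : t ≤ K⁻¹ := (lt_of_lt_of_le htδ (min_le_right _ _)).le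
    calc t * K ≤ K⁻¹ * K := mul_le_mul_of_nonneg_right h1 hKpos.le
    _ = 1 := inv_mul_cancel₀ hKpos.ne'
  have hwu : ‖w - u‖ ≤ σ / 2 := mem_closedBall_iff_norm.mp hw
  have hwnorm : ‖w‖ ≤ ‖u‖ + σ / 2 := by
    have := norm_sub_norm_le w u; linarith
  have hcm : ∀ m : ℕ, (0:ℝ) < (2⁻¹:ℝ) ^ m ∧ (2⁻¹:ℝ) ^ m ≤ 1 :=
    fun m => ⟨by positivity, pow_le_one₀ (by norm_num) (by norm_num)⟩
  have step : ∀ (m : ℕ) (a : En n),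
      ∃ b, (a ∈ C ∧ ‖a - (y + (t * (1 - (2⁻¹:ℝ) ^ m)) • w)‖ ≤ σ / 8 * (t * (2⁻¹:ℝ) ^ m)) →
        (b ∈ C ∧ ‖b - (y + (t * (1 - (2⁻¹:ℝ) ^ (m+1))) • w)‖
          ≤ σ / 8 * (t * (2⁻¹:ℝ) ^ (m+1))) := by
    intro m a
    by_cases hg : a ∈ C ∧ ‖a - (y + (t * (1 - (2⁻¹:ℝ) ^ m)) • w)‖ ≤ σ / 8 * (t * (2⁻¹:ℝ) ^ m)
    · obtain ⟨haC, hae'⟩ := hg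
      obtain ⟨hc0, hc1⟩ := hcm m
      obtain ⟨c, hc⟩ : ∃ c : ℝ, c = (2⁻¹:ℝ) ^ m := ⟨_, rfl⟩
      have hcsucc : (2⁻¹:ℝ) ^ (m + 1) = c / 2 := by rw [hc, pow_succ]; ring
      rw [hcsucc]
      rw [← hc] at hc0 hc1 hae'
      obtain ⟨τ, hτc⟩ : ∃ τ : ℝ, τ = t * c / 2 := ⟨_, rfl⟩
      have hτpos : 0 < τ := by rw [hτc]; positivity
      have hτδ : τ < δ := by
        have htc : t * c ≤ t := mul_le_of_le_one_right ht.le hc1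
        have : τ ≤ t / 2 := by rw [hτc]; linarith
        linarith
      have hae : ‖a - (y + (t * (1 - c)) • w)‖ ≤ σ / 8 * (t * c) := hae'
      -- farness of a
      have hay : ‖a - y‖ ≤ t * K := by
        have h1 : a - y = (a - (y + (t * (1 - c)) • w)) + (t * (1 - c)) • w := by abel
        have h2 : ‖a - y‖ ≤ ‖a - (y + (t * (1 - c)) • w)‖ + ‖(t * (1 - c)) • w‖ := by
          rw [h1]; exact norm_add_le _ _
        have h3 : ‖(t * (1 - c)) • w‖ = (t * (1 - c)) * ‖w‖ := by
          rw [norm_smul, Real.norm_of_nonneg (by nlinarith)]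
        have h4 : (t * (1 - c)) * ‖w‖ ≤ t * (‖u‖ + σ / 2) := by
          have hw0 : 0 ≤ ‖w‖ := norm_nonneg w
          nlinarith
        have htc : t * c ≤ t := mul_le_of_le_one_right ht.le hc1
        have h5 : σ / 8 * (t * c) ≤ σ / 8 * t := by nlinarith
        rw [hK]; nlinarith
      have haR : R ≤ ‖proj I a‖ := by
        have h1 := proj_norm_lower I y a
        have h2 : ‖y - a‖ = ‖a - y‖ := norm_sub_rev _ _
        linarith
      -- direction
      obtain ⟨w', hw'def⟩ : ∃ w' : En n, w' = w + τ⁻¹ • ((y + (t * (1 - c)) • w) - a) :=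
        ⟨_, rfl⟩
      have hkey : a + τ • w' = y + (t * (1 - c / 2)) • w := by
        rw [hw'def, smul_add, smul_inv_smul₀ hτpos.ne']
        have hs : t * (1 - c / 2) = t * (1 - c) + τ := by rw [hτc]; ring
        rw [hs, add_smul]; abel
      have hw'ball : w' ∈ Metric.closedBall u σ := by
        rw [mem_closedBall_iff_norm]
        have h1 : w' - u = (w - u) + τ⁻¹ • ((y + (t * (1 - c)) • w) - a) := by
          rw [hw'def]; abel
        have h2 : ‖w' - u‖ ≤ ‖w - u‖ + ‖τ⁻¹ • ((y + (t * (1 - c)) • w) - a)‖ := by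
          rw [h1]; exact norm_add_le _ _
        have h3 : ‖τ⁻¹ • ((y + (t * (1 - c)) • w) - a)‖
            = τ⁻¹ * ‖a - (y + (t * (1 - c)) • w)‖ := by
          rw [norm_smul, Real.norm_of_nonneg (inv_nonneg.mpr hτpos.le), norm_sub_rev]
        have h4 : τ⁻¹ * ‖a - (y + (t * (1 - c)) • w)‖ ≤ τ⁻¹ * (σ / 8 * (t * c)) :=
          mul_le_mul_of_nonneg_left hae (inv_nonneg.mpr hτpos.le)
        have h5 : τ⁻¹ * (σ / 8 * (t * c)) = σ / 4 := by
          rw [hτc]; field_simp; ring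
        linarith
      have hdist := hU a haC haR τ hτpos hτδ w' hw'ball
      obtain ⟨b, hbC, hbd⟩ := hC.exists_infDist_eq_dist ⟨a, haC⟩ (a + τ • w')
      refine ⟨b, fun _ => ⟨hbC, ?_⟩⟩
      have h6 : ‖b - (y + (t * (1 - c / 2)) • w)‖ = dist (a + τ • w') b := by
        rw [← hkey, dist_eq_norm, norm_sub_rev]
      rw [h6, ← hbd]
      calc Metric.infDist (a + τ • w') C ≤ σ / 8 * τ := hdist
      _ = σ / 8 * (t * (c / 2)) := by rw [hτc]; ring
    · exact ⟨y, fun h => absurd h hg⟩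
  choose f hf using step
  obtain ⟨zs, hz0, hzs⟩ : ∃ zs : ℕ → En n, zs 0 = y ∧ ∀ m, zs (m + 1) = f m (zs m) :=
    ⟨fun m => Nat.rec y (fun m ih => f m ih) m, rfl, fun m => rfl⟩
  have hgoodz : ∀ m, zs m ∈ C ∧
      ‖zs m - (y + (t * (1 - (2⁻¹:ℝ) ^ m)) • w)‖ ≤ σ / 8 * (t * (2⁻¹:ℝ) ^ m) := by
    intro m
    induction m with
    | zero =>
      rw [hz0]
      refine ⟨hyC, ?_⟩
      simp only [pow_zero, sub_self, mul_zero, zero_smul, add_zero, mul_one]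
      simp only [norm_zero]
      positivity
    | succ m ih =>
      rw [hzs]; exact hf m (zs m) ih
  have hlim : Tendsto zs atTop (𝓝 (y + t • w)) := by
    rw [tendsto_iff_dist_tendsto_zero]
    refine squeeze_zero (fun m => dist_nonneg)
      (g := fun m => (σ / 8 * t + t * ‖w‖) * (2⁻¹:ℝ) ^ m) (fun m => ?_) ?_
    · show dist (zs m) (y + t • w) ≤ (σ / 8 * t + t * ‖w‖) * (2⁻¹:ℝ) ^ m
      obtain ⟨hgC, hge⟩ := hgoodz m
      obtain ⟨hc0, hc1⟩ := hcm m
      obtain ⟨c, hc⟩ : ∃ c : ℝ, c = (2⁻¹:ℝ) ^ m := ⟨_, rfl⟩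
      rw [← hc] at hc0 hc1 hge ⊢
      have h1 : zs m - (y + t • w)
          = (zs m - (y + (t * (1 - c)) • w)) + ((t * (1 - c)) - t) • w := by
        rw [sub_smul]; abel
      have h2 : dist (zs m) (y + t • w) ≤ ‖zs m - (y + (t * (1 - c)) • w)‖
          + ‖((t * (1 - c)) - t) • w‖ := by
        rw [dist_eq_norm, h1]; exact norm_add_le _ _
      have h3 : ‖((t * (1 - c)) - t) • w‖ = t * c * ‖w‖ := by
        rw [norm_smul, Real.norm_eq_abs]
        have h4 : t * (1 - c) - t = -(t * c) := by ring
        rw [h4, abs_neg, abs_of_nonneg (by positivity)]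
      have hw0 : 0 ≤ ‖w‖ := norm_nonneg w
      nlinarith
    · have h := tendsto_pow_atTop_nhds_zero_of_lt_one (by norm_num : (0:ℝ) ≤ 2⁻¹)
        (by norm_num : (2⁻¹:ℝ) < 1)
      simpa using h.const_mul (σ / 8 * t + t * ‖w‖)
  exact hC.mem_of_tendsto hlim (Filter.Eventually.of_forall fun m => (hgoodz m).1)

/-- Corollary 3.7: if the Clarke tangent cone at infinity of a closed set has nonempty
interior, then the normal cone multifunction is closed at infinity. -/
theorem stmt3 (n : ℕ) (C : Set (En n)) (I : Finset (Fin n)) (hI : I.Nonempty)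
    (hC : IsClosed C) (hunb : ¬ IsBounded (proj I '' C))
    (hint : (interior (tangentConeAtInfty (proj I) C)).Nonempty)
    (x z : ℕ → En n) (zlim : En n)
    (hxC : ∀ k, x k ∈ C)
    (hxinf : Tendsto (fun k => ‖proj I (x k)‖) atTop atTop)
    (hz : ∀ k, z k ∈ clarkeNormalCone C (x k))
    (hzlim : Tendsto z atTop (𝓝 zlim)) :
    zlim ∈ normalConeAtInfty (proj I) C := by
  intro v hv
  obtain ⟨v₀, hv₀⟩ := hint
  rw [mem_interior_iff_mem_nhds] at hv₀
  obtain ⟨ρ, hρ, hballρ⟩ := Metric.mem_nhds_iff.mp hv₀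
  have key : ∀ ε : ℝ, 0 < ε → ⟪v, zlim⟫_ℝ ≤ ε := by
    intro ε hε
    obtain ⟨lam, hlamdef⟩ : ∃ lam : ℝ,
        lam = min (1/2) (ε / ((‖v₀ - v‖ + 1) * (‖zlim‖ + 1))) := ⟨_, rfl⟩
    have hlam0 : 0 < lam := by
      rw [hlamdef]; refine lt_min (by norm_num) (by positivity)
    have hlam1 : lam ≤ 1/2 := by rw [hlamdef]; exact min_le_left _ _
    have hlam2 : lam ≤ ε / ((‖v₀ - v‖ + 1) * (‖zlim‖ + 1)) := by
      rw [hlamdef]; exact min_le_right _ _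
    obtain ⟨u, hudef⟩ : ∃ u : En n, u = (1 - lam) • v + lam • v₀ := ⟨_, rfl⟩
    obtain ⟨σ, hσdef⟩ : ∃ σ : ℝ, σ = lam * ρ / 2 := ⟨_, rfl⟩
    have hσ : 0 < σ := by rw [hσdef]; positivity
    have hballu : Metric.closedBall u σ ⊆ tangentConeAtInfty (proj I) C := by
      intro q hq
      have hq' : ‖q - u‖ ≤ σ := mem_closedBall_iff_norm.mp hq
      have h1 : v₀ + lam⁻¹ • (q - u) ∈ Metric.ball v₀ ρ := by
        rw [mem_ball, dist_eq_norm]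
        have : v₀ + lam⁻¹ • (q - u) - v₀ = lam⁻¹ • (q - u) := by abel
        rw [this, norm_smul, Real.norm_of_nonneg (inv_nonneg.mpr hlam0.le)]
        have h2 : lam⁻¹ * ‖q - u‖ ≤ lam⁻¹ * σ := by
          exact mul_le_mul_of_nonneg_left hq' (inv_nonneg.mpr hlam0.le)
        have h3 : lam⁻¹ * σ = ρ / 2 := by
          rw [hσdef]; field_simp
        nlinarith
      have h2 := hballρ h1
      have h3 := tangent_add (tangent_smul hv (by linarith : (0:ℝ) < 1 - lam))
        (tangent_smul h2 hlam0)
      have h4 : (1 - lam) • v + lam • (v₀ + lam⁻¹ • (q - u)) = q := by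
        rw [smul_add, smul_inv_smul₀ hlam0.ne', hudef]
        abel
      rw [← h4]; exact h3
    obtain ⟨R', δ', hδ', hhyp⟩ := hyper hC hσ hballu
    -- eventually the inner products with u are nonpositive
    have hev : ∀ᶠ k in atTop, ⟪u, z k⟫_ℝ ≤ 0 := by
      filter_upwards [hxinf.eventually_ge_atTop (R' + 1)] with k hk
      refine hz k u ?_
      intro xk tt hxkC hxk ht ht0
      classical
      have hev1 : ∀ᶠ m in atTop, R' ≤ ‖proj I (xk m)‖ := by
        have hd : Tendsto (fun m => ‖xk m - x k‖) atTop (𝓝 0) := by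
          rw [← tendsto_iff_norm_sub_tendsto_zero]; exact hxk
        filter_upwards [hd.eventually_le_const one_pos] with m hm
        have h1 := proj_norm_lower I (x k) (xk m)
        have h2 : ‖x k - xk m‖ = ‖xk m - x k‖ := norm_sub_rev _ _
        linarith
      have hev2 : ∀ᶠ m in atTop, tt m < δ' := ht0.eventually_lt_const hδ'
      refine ⟨fun m => if R' ≤ ‖proj I (xk m)‖ ∧ tt m < δ' then u else 0, ?_, ?_⟩
      · refine Tendsto.congr' ?_ (tendsto_const_nhds (x := u))
        filter_upwards [hev1, hev2] with m h1 h2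
        rw [if_pos ⟨h1, h2⟩]
      · intro m
        dsimp only
        by_cases h : R' ≤ ‖proj I (xk m)‖ ∧ tt m < δ'
        · rw [if_pos h]
          exact hhyp (xk m) (hxkC m) h.1 (tt m) (ht m) h.2 u
            (mem_closedBall_self (by positivity))
        · rw [if_neg h, smul_zero, add_zero]; exact hxkC m
    have hu0 : ⟪u, zlim⟫_ℝ ≤ 0 := le_of_tendsto (tendsto_const_nhds.inner hzlim) hev
    -- compare inner products
    have hsplit : ⟪v, zlim⟫_ℝ = ⟪u, zlim⟫_ℝ + ⟪v - u, zlim⟫_ℝ := by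
      rw [← inner_add_left]
      congr 1
      abel
    have hvu : v - u = lam • (v - v₀) := by
      rw [hudef, smul_sub, sub_smul, one_smul]; abel
    have hbound : ⟪v - u, zlim⟫_ℝ ≤ lam * (‖v - v₀‖ * ‖zlim‖) := by
      calc ⟪v - u, zlim⟫_ℝ ≤ ‖v - u‖ * ‖zlim‖ := real_inner_le_norm _ _
      _ = lam * (‖v - v₀‖ * ‖zlim‖) := by
          rw [hvu, norm_smul, Real.norm_of_nonneg hlam0.le]; ring
    have hfin : lam * (‖v - v₀‖ * ‖zlim‖) ≤ ε := by
      have hA : ‖v - v₀‖ = ‖v₀ - v‖ := norm_sub_rev _ _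
      have h1 : ‖v₀ - v‖ * ‖zlim‖ ≤ (‖v₀ - v‖ + 1) * (‖zlim‖ + 1) := by
        nlinarith [norm_nonneg (v₀ - v), norm_nonneg zlim]
      have hpos : (0:ℝ) < (‖v₀ - v‖ + 1) * (‖zlim‖ + 1) := by positivity
      calc lam * (‖v - v₀‖ * ‖zlim‖) ≤ (ε / ((‖v₀ - v‖ + 1) * (‖zlim‖ + 1)))
            * ((‖v₀ - v‖ + 1) * (‖zlim‖ + 1)) := by
            rw [hA]
            refine mul_le_mul hlam2 h1 (by positivity) (by positivity)
      _ = ε := div_mul_cancel₀ ε hpos.ne'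
    linarith
  by_contra hcon
  push_neg at hcon
  linarith [key (⟪v, zlim⟫_ℝ / 2) (by linarith)]
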